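/- If f : H_n → H_n is an additive commuting map, then for all 2 ≤ i, j ≤ n−1: (a) f_{j,n}(e_{1,i}) = −f_{i,n}(e_{1,j}); (b) f_{1,j}(e_{1,i}) = f_{i,n}(e_{j,n}); (c) f_{1,j}(e_{i,n}) = −f_{1,i}(e_{j,n}), where f_{1,k}(X) and f_{k,n}(X) denote the (1,k)- and (k,n)-entries of f(X). -/

import Mathlib

open Matrix

/-- `X` belongs to the Heisenberg algebra `H_n`: its only possibly nonzero entries lie
in the first row strictly above the diagonal or the last column strictly above the diagonal
(0-based indices: row 0 with column ≠ 0, or column `n-1` with row ≠ `n-1`). -/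
def IsHeis {n : ℕ} {F : Type*} [Field F] (X : Matrix (Fin n) (Fin n) F) : Prop :=
  ∀ i j : Fin n, ¬ ((i.val = 0 ∧ j.val ≠ 0) ∨ (j.val = n - 1 ∧ i.val ≠ n - 1)) → X i j = 0

/-- Anti-transpose: `(antiT X) i j = X (rev j) (rev i)`. -/
def antiT {n : ℕ} {F : Type*} [Field F] (X : Matrix (Fin n) (Fin n) F) :
    Matrix (Fin n) (Fin n) F :=
  Matrix.of fun i j => X j.rev i.rev

/-- `A ∈ C_n`: first and last rows and columns of `A` are zero. -/
def IsC {n : ℕ} {F : Type*} [Field F] (A : Matrix (Fin n) (Fin n) F) : Prop :=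
  ∀ i j : Fin n, (i.val = 0 ∨ i.val = n - 1 ∨ j.val = 0 ∨ j.val = n - 1) → A i j = 0

/-- `A ∈ P_n`: hollow skew-persymmetric matrices in `C_n`. -/
def IsP {n : ℕ} {F : Type*} [Field F] (A : Matrix (Fin n) (Fin n) F) : Prop :=
  IsC A ∧ (∀ i j : Fin n, antiT A i j = - A i j) ∧ (∀ i : Fin n, A i i.rev = 0)

theorem stmt10 {n : ℕ} (hn : 3 ≤ n) {F : Type*} [Field F] [CharZero F]
    (f : Matrix (Fin n) (Fin n) F → Matrix (Fin n) (Fin n) F)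
    (hmaps : ∀ X, IsHeis X → IsHeis (f X))
    (hadd : ∀ X Y, IsHeis X → IsHeis Y → f (X + Y) = f X + f Y)
    (hcomm : ∀ X, IsHeis X → f X * X = X * f X) :
    ∀ i j : Fin n, 1 ≤ i.val → i.val ≤ n - 2 → 1 ≤ j.val → j.val ≤ n - 2 →
      f (Matrix.single ⟨0, by omega⟩ i (1 : F)) j ⟨n - 1, by omega⟩ =
        - f (Matrix.single ⟨0, by omega⟩ j (1 : F)) i ⟨n - 1, by omega⟩ ∧
      f (Matrix.single ⟨0, by omega⟩ i (1 : F)) ⟨0, by omega⟩ j =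
        f (Matrix.single j ⟨n - 1, by omega⟩ (1 : F)) i ⟨n - 1, by omega⟩ ∧
      f (Matrix.single i ⟨n - 1, by omega⟩ (1 : F)) ⟨0, by omega⟩ j =
        - f (Matrix.single j ⟨n - 1, by omega⟩ (1 : F)) ⟨0, by omega⟩ i := by
  have e0 : Fin n := ⟨0, by omega⟩
  -- Heisenberg membership of the basic matrices
  have hH1 : ∀ k : Fin n, 1 ≤ k.val → k.val ≤ n - 2 →
      IsHeis (Matrix.single (⟨0, by omega⟩ : Fin n) k (1 : F)) := by
    intro k hk1 hk2 p q hpq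
    apply Matrix.single_apply_of_ne
    rintro ⟨rfl, rfl⟩
    exact hpq (Or.inl ⟨rfl, by omega⟩)
  have hH2 : ∀ k : Fin n, 1 ≤ k.val → k.val ≤ n - 2 →
      IsHeis (Matrix.single k (⟨n - 1, by omega⟩ : Fin n) (1 : F)) := by
    intro k hk1 hk2 p q hpq
    apply Matrix.single_apply_of_ne
    rintro ⟨rfl, rfl⟩
    exact hpq (Or.inr ⟨rfl, by omega⟩)
  have hHadd : ∀ X Y : Matrix (Fin n) (Fin n) F, IsHeis X → IsHeis Y → IsHeis (X + Y) := by
    intro X Y hX hY p q hpq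
    simp [Matrix.add_apply, hX p q hpq, hY p q hpq]
  -- Zero lemma 1 : f(e_{0,k}) k (n-1) = 0
  have Z1 : ∀ k : Fin n, 1 ≤ k.val → k.val ≤ n - 2 →
      f (Matrix.single (⟨0, by omega⟩ : Fin n) k (1 : F)) k ⟨n - 1, by omega⟩ = 0 := by
    intro k hk1 hk2
    have h := congrFun (congrFun (hcomm _ (hH1 k hk1 hk2)) ⟨0, by omega⟩) ⟨n - 1, by omega⟩
    have h1 : (⟨n - 1, by omega⟩ : Fin n) ≠ k := by simp [Fin.ext_iff]; omega
    simp [h1] at h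
    exact h.symm
  -- Zero lemma 2 : f(e_{k,n-1}) 0 k = 0
  have Z2 : ∀ k : Fin n, 1 ≤ k.val → k.val ≤ n - 2 →
      f (Matrix.single k (⟨n - 1, by omega⟩ : Fin n) (1 : F)) ⟨0, by omega⟩ k = 0 := by
    intro k hk1 hk2
    have h := congrFun (congrFun (hcomm _ (hH2 k hk1 hk2)) ⟨0, by omega⟩) ⟨n - 1, by omega⟩
    have h1 : (⟨0, by omega⟩ : Fin n) ≠ k := by simp [Fin.ext_iff]; omega
    simp [h1] at h
    exact h
  intro i j hi1 hi2 hj1 hj2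
  have hie : (⟨n - 1, by omega⟩ : Fin n) ≠ i := by simp [Fin.ext_iff]; omega
  have hje : (⟨n - 1, by omega⟩ : Fin n) ≠ j := by simp [Fin.ext_iff]; omega
  have hi0 : (⟨0, by omega⟩ : Fin n) ≠ i := by simp [Fin.ext_iff]; omega
  have hj0 : (⟨0, by omega⟩ : Fin n) ≠ j := by simp [Fin.ext_iff]; omega
  refine ⟨?_, ?_, ?_⟩
  · -- part (a)
    have hX := hHadd _ _ (hH1 i hi1 hi2) (hH1 j hj1 hj2)
    have hF := hadd _ _ (hH1 i hi1 hi2) (hH1 j hj1 hj2)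
    have h := congrFun (congrFun (hcomm _ hX) ⟨0, by omega⟩) ⟨n - 1, by omega⟩
    rw [mul_add, add_mul, hF] at h
    simp [Matrix.add_apply, hie, hje, Matrix.add_mul, Matrix.mul_add] at h
    have z1 := Z1 i hi1 hi2
    have z2 := Z1 j hj1 hj2
    linear_combination -h - z1 - z2
  · -- part (b)
    have hX := hHadd _ _ (hH1 i hi1 hi2) (hH2 j hj1 hj2)
    have hF := hadd _ _ (hH1 i hi1 hi2) (hH2 j hj1 hj2)
    have h := congrFun (congrFun (hcomm _ hX) ⟨0, by omega⟩) ⟨n - 1, by omega⟩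
    rw [mul_add, add_mul, hF] at h
    simp [Matrix.add_apply, hie, hj0, Matrix.add_mul, Matrix.mul_add] at h
    have z1 := Z1 i hi1 hi2
    have z2 := Z2 j hj1 hj2
    linear_combination h + z1 - z2
  · -- part (c)
    have hX := hHadd _ _ (hH2 i hi1 hi2) (hH2 j hj1 hj2)
    have hF := hadd _ _ (hH2 i hi1 hi2) (hH2 j hj1 hj2)
    have h := congrFun (congrFun (hcomm _ hX) ⟨0, by omega⟩) ⟨n - 1, by omega⟩
    rw [mul_add, add_mul, hF] at h
    simp [Matrix.add_apply, hi0, hj0, Matrix.add_mul, Matrix.mul_add] at h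
    have z1 := Z2 i hi1 hi2
    have z2 := Z2 j hj1 hj2
    linear_combination h - z1 - z2
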